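/- Main corollary: under the same assumptions, if 0 ∉ Δ(𝕊) where Δ(𝕊) = {Δ(e^{iθ}) : θ ∈ [0,2π]}, then the equation Δ(z) = 0 has exactly r − Ind_{Δ(𝕊)}(0) solutions (with multiplicity) in {|z| > 1}. -/

import Mathlib

open Polynomial Real

/-- `IsWindingNumber c n` : the closed curve `c : [0,2π] → ℂ \ {0}` winds `n` times
around the origin, witnessed by continuous polar lifts. -/
def IsWindingNumber (c : ℝ → ℂ) (n : ℤ) : Prop :=
  ∃ ρ θ : ℝ → ℝ, ContinuousOn ρ (Set.Icc 0 (2 * π)) ∧ ContinuousOn θ (Set.Icc 0 (2 * π)) ∧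
    (∀ t ∈ Set.Icc 0 (2 * π), (0 : ℝ) < ρ t ∧
      c t = (ρ t : ℂ) * Complex.exp ((θ t : ℂ) * Complex.I)) ∧
    θ (2 * π) - θ 0 = 2 * π * n

namespace Wind

lemma congr' {c c' : ℝ → ℂ} {n : ℤ} (h : ∀ t ∈ Set.Icc 0 (2*π), c t = c' t)
    (hc : IsWindingNumber c n) : IsWindingNumber c' n := by
  obtain ⟨ρ, θ, h1, h2, h3, h4⟩ := hc
  exact ⟨ρ, θ, h1, h2, fun t ht => ⟨(h3 t ht).1, (h t ht) ▸ (h3 t ht).2⟩, h4⟩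

lemma mul {c₁ c₂ : ℝ → ℂ} {n₁ n₂ : ℤ} (h₁ : IsWindingNumber c₁ n₁)
    (h₂ : IsWindingNumber c₂ n₂) :
    IsWindingNumber (fun t => c₁ t * c₂ t) (n₁ + n₂) := by
  obtain ⟨ρ₁, θ₁, hρ₁, hθ₁, hh₁, e₁⟩ := h₁
  obtain ⟨ρ₂, θ₂, hρ₂, hθ₂, hh₂, e₂⟩ := h₂
  refine ⟨fun t => ρ₁ t * ρ₂ t, fun t => θ₁ t + θ₂ t, hρ₁.mul hρ₂, hθ₁.add hθ₂, ?_, ?_⟩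
  · intro t ht
    obtain ⟨p1, q1⟩ := hh₁ t ht; obtain ⟨p2, q2⟩ := hh₂ t ht
    refine ⟨mul_pos p1 p2, ?_⟩
    dsimp only
    rw [q1, q2]; push_cast; rw [add_mul, Complex.exp_add]; ring
  · push_cast; push_cast at e₁ e₂; linarith

lemma inv {c : ℝ → ℂ} {n : ℤ} (h : IsWindingNumber c n) :
    IsWindingNumber (fun t => (c t)⁻¹) (-n) := by
  obtain ⟨ρ, θ, hρ, hθ, hh, e⟩ := h
  refine ⟨fun t => (ρ t)⁻¹, fun t => -θ t,
    hρ.inv₀ (fun t ht => (hh t ht).1.ne'), hθ.neg, ?_, ?_⟩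
  · intro t ht
    obtain ⟨p, q⟩ := hh t ht
    refine ⟨inv_pos.2 p, ?_⟩
    dsimp only
    rw [q, mul_inv, ← Complex.exp_neg]
    push_cast; rw [neg_mul]
  · push_cast; push_cast at e; linarith

lemma const {z : ℂ} (hz : z ≠ 0) : IsWindingNumber (fun _ => z) 0 := by
  refine ⟨fun _ => ‖z‖, fun _ => z.arg, continuousOn_const, continuousOn_const,
    fun t ht => ⟨norm_pos_iff.mpr hz, (Complex.norm_mul_exp_arg_mul_I z).symm⟩, by simp⟩

lemma circle : IsWindingNumber (fun t : ℝ => Complex.exp (Complex.I * t)) 1 := by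
  refine ⟨fun _ => 1, id, continuousOn_const, continuousOn_id, ?_, by simp⟩
  intro t ht
  refine ⟨one_pos, ?_⟩
  show Complex.exp (Complex.I * t) = ((1:ℝ):ℂ) * Complex.exp ((t:ℂ) * Complex.I)
  push_cast
  rw [one_mul, mul_comm]

lemma posRe {g : ℝ → ℂ} (hg : ContinuousOn g (Set.Icc 0 (2*π)))
    (hre : ∀ t ∈ Set.Icc 0 (2*π), 0 < (g t).re)
    (hper : g (2*π) = g 0) : IsWindingNumber g 0 := by
  refine ⟨fun t => ‖g t‖, fun t => (g t).arg, ?_, ?_, ?_, by simp [hper]⟩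
  · exact continuous_norm.comp_continuousOn hg
  · intro t ht
    exact (Complex.continuousAt_arg (Or.inl (hre t ht))).comp_continuousWithinAt (hg t ht)
  · intro t ht
    have h0 : g t ≠ 0 := fun h => absurd (hre t ht) (by simp [h])
    exact ⟨norm_pos_iff.mpr h0, (Complex.norm_mul_exp_arg_mul_I _).symm⟩

lemma pow {c : ℝ → ℂ} {n : ℤ} (h : IsWindingNumber c n) (k : ℕ) :
    IsWindingNumber (fun t => c t ^ k) ((k : ℤ) * n) := by
  induction k with
  | zero => simpa using const one_ne_zero
  | succ k ih =>
      have h2 := mul h ih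
      have e : ((k+1 : ℕ) : ℤ) * n = n + (k:ℤ) * n := by push_cast; ring
      rw [e]
      exact congr' (fun t ht => by rw [pow_succ]; ring) h2

lemma unique {c : ℝ → ℂ} {n n' : ℤ} (h : IsWindingNumber c n)
    (h' : IsWindingNumber c n') : n = n' := by
  obtain ⟨ρ, θ, hρ, hθ, hh, e⟩ := h
  obtain ⟨ρ', θ', hρ', hθ', hh', e'⟩ := h'
  have key : ∀ t ∈ Set.Icc 0 (2*π), ∃ k : ℤ, θ t - θ' t = 2 * π * k := by
    intro t ht
    obtain ⟨p, q⟩ := hh t ht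
    obtain ⟨p', q'⟩ := hh' t ht
    have habs : ρ t = ρ' t := by
      have := congrArg (‖·‖) (q.symm.trans q')
      simpa [Complex.norm_exp, abs_of_pos p, abs_of_pos p'] using this
    have hexp : Complex.exp ((θ t : ℂ) * Complex.I) = Complex.exp ((θ' t : ℂ) * Complex.I) := by
      have hq := q.symm.trans q'
      rw [habs] at hq
      exact mul_left_cancel₀ (by exact_mod_cast (habs ▸ p).ne') hq
    obtain ⟨k, hk⟩ := Complex.exp_eq_exp_iff_exists_int.mp hexp
    refine ⟨k, ?_⟩
    have him := congrArg Complex.im hk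
    simp at him
    linarith
  set f : ℝ → ℝ := fun t => θ t - θ' t with hf
  have hfc : ContinuousOn f (Set.Icc 0 (2*π)) := hθ.sub hθ'
  have h2π : (0:ℝ) ≤ 2*π := by positivity
  have hmem0 : (0:ℝ) ∈ Set.Icc 0 (2*π) := by constructor <;> linarith
  have hmem1 : (2*π) ∈ Set.Icc 0 (2*π) := by constructor <;> linarith
  obtain ⟨k₀, hk₀⟩ := key 0 hmem0
  obtain ⟨k₁, hk₁⟩ := key (2*π) hmem1
  have mid : ∀ (j j' : ℤ), j < j' →
      Set.Icc (2*π*(j:ℝ)) (2*π*(j':ℝ)) ⊆ f '' Set.Icc 0 (2*π) → False := by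
    intro j j' hjj hsub
    have hj1 : (j:ℝ)+1 ≤ (j':ℝ) := by exact_mod_cast hjj
    have hpi := Real.pi_pos
    have hmid : (2*π*(j:ℝ) + π) ∈ Set.Icc (2*π*(j:ℝ)) (2*π*(j':ℝ)) := by
      constructor
      · linarith
      · nlinarith
    obtain ⟨t, ht', hft⟩ := hsub hmid
    obtain ⟨k, hk⟩ := key t ht'
    have hx : 2*π*(k:ℝ) = 2*π*(j:ℝ) + π := by rw [← hk]; exact hft
    have h2 : π * (2*(k:ℝ)) = π * (2*(j:ℝ)+1) := by linear_combination hx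
    have h3 : (2*(k:ℝ)) = 2*(j:ℝ)+1 := mul_left_cancel₀ Real.pi_ne_zero h2
    have h4 : (2*k : ℤ) = 2*j+1 := by exact_mod_cast h3
    omega
  have hkk : k₀ = k₁ := by
    by_contra hne
    rcases lt_or_gt_of_ne hne with hlt | hgt
    · apply mid k₀ k₁ hlt
      rw [← hk₀, ← hk₁]
      exact intermediate_value_Icc h2π hfc
    · apply mid k₁ k₀ hgt
      rw [← hk₀, ← hk₁]
      exact intermediate_value_Icc' h2π hfc
  have h1 : θ (2*π) - θ' (2*π) = θ 0 - θ' 0 := by rw [hk₀, hk₁, hkk]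
  have : 2*π*(n:ℝ) = 2*π*(n':ℝ) := by linarith [e, e']
  have := mul_left_cancel₀ (by positivity : (2*π:ℝ) ≠ 0) this
  exact_mod_cast this

lemma exp_I_abs (t : ℝ) : ‖Complex.exp (Complex.I * t)‖ = 1 := by
  rw [Complex.norm_exp]
  simp

lemma exp_two_pi : Complex.exp (Complex.I * (2 * (π:ℂ))) = 1 := by
  rw [show Complex.I * (2*(π:ℂ)) = 2*π*Complex.I by ring]
  exact Complex.exp_two_pi_mul_I

lemma sub_inside {a : ℂ} (ha : ‖a‖ < 1) :
    IsWindingNumber (fun t : ℝ => Complex.exp (Complex.I * t) - a) 1 := by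
  have h1 : IsWindingNumber (fun t : ℝ => 1 - a * Complex.exp (-(Complex.I * t))) 0 := by
    apply posRe
    · fun_prop
    · intro t ht
      have hb : ‖a * Complex.exp (-(Complex.I * t))‖ = ‖a‖ := by
        rw [norm_mul, Complex.norm_exp]
        simp
      have := Complex.re_le_norm (a * Complex.exp (-(Complex.I * t)))
      simp only [Complex.sub_re, Complex.one_re, Complex.mul_re]
      have h2 := (Complex.re_le_norm (a * Complex.exp (-(Complex.I * t)))).trans_eq hb
      simp only [Complex.mul_re] at h2
      linarith
    · norm_num
      rw [Complex.exp_neg, exp_two_pi, inv_one, mul_one]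
  have h2 := mul circle h1
  refine congr' (fun t ht => ?_) (by simpa using h2)
  rw [mul_sub, mul_one, show Complex.exp (Complex.I*(t:ℂ)) * (a * Complex.exp (-(Complex.I*(t:ℂ))))
    = a * (Complex.exp (Complex.I*(t:ℂ)) * Complex.exp (-(Complex.I*(t:ℂ)))) from by ring,
    ← Complex.exp_add]
  simp

lemma sub_outside {a : ℂ} (ha : 1 < ‖a‖) :
    IsWindingNumber (fun t : ℝ => Complex.exp (Complex.I * t) - a) 0 := by
  have ha0 : a ≠ 0 := by
    intro h; rw [h] at ha; simp at ha; linarith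
  have h1 : IsWindingNumber (fun t : ℝ => 1 - Complex.exp (Complex.I * t) / a) 0 := by
    apply posRe
    · fun_prop (disch := assumption)
    · intro t ht
      have hb : ‖Complex.exp (Complex.I * t) / a‖ = ‖a‖⁻¹ := by
        rw [norm_div, exp_I_abs t, one_div]
      have h2 := (Complex.re_le_norm (Complex.exp (Complex.I * t) / a)).trans_eq hb
      have h3 : ‖a‖⁻¹ < 1 := by
        rw [inv_lt_one_iff₀]; right; exact ha
      simp only [Complex.sub_re, Complex.one_re]
      linarith
    · norm_num
      rw [exp_two_pi, one_div]
  have h2 := mul (const (neg_ne_zero.mpr ha0)) h1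
  refine congr' (fun t ht => ?_) (by simpa using h2)
  field_simp
  ring

lemma multiset_prod (s : Multiset ℂ) (hs : ∀ a ∈ s, ‖a‖ ≠ 1) :
    IsWindingNumber (fun t => (s.map (fun a => Complex.exp (Complex.I * t) - a)).prod)
      ((s.filter (fun a => ‖a‖ < 1)).card) := by
  induction s using Multiset.induction with
  | empty => simpa using const one_ne_zero
  | cons a s ih =>
      have hs' : ∀ b ∈ s, ‖b‖ ≠ 1 := fun b hb => hs b (Multiset.mem_cons_of_mem hb)
      have ha := hs a (Multiset.mem_cons_self a s)
      have hrest := ih hs'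
      by_cases h : ‖a‖ < 1
      · have h2 := mul (sub_inside h) hrest
        have hn : (((a ::ₘ s).filter (fun a => ‖a‖ < 1)).card : ℤ)
            = 1 + ((s.filter (fun a => ‖a‖ < 1)).card : ℤ) := by
          simp [Multiset.filter_cons, h]
          push_cast
          ring
        rw [hn]
        exact congr' (fun t ht => by simp [Multiset.prod_cons]) h2
      · have h' : 1 < ‖a‖ := lt_of_le_of_ne (not_lt.1 h) (Ne.symm ha)
        have h2 := mul (sub_outside h') hrest
        have hn : (((a ::ₘ s).filter (fun a => ‖a‖ < 1)).card : ℤ)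
            = ((s.filter (fun a => ‖a‖ < 1)).card : ℤ) := by
          simp [Multiset.filter_cons, h]
        rw [hn, ← zero_add (((s.filter (fun a => ‖a‖ < 1)).card : ℤ))]
        exact congr' (fun t ht => by simp [Multiset.prod_cons]) h2

end Wind

/-- Main corollary: if `0 ∉ Δ(𝕊)`, then `Δ(z) = 0` has exactly `r - Ind_{Δ(𝕊)}(0)`
solutions, with multiplicity, in `{|z| > 1}`. Here
`Δ(z) = (-1)^{r(m-r)} det C(z) (a_{-r}/(a₀-z))^{m-r}` with `det C` of degree `m`. -/
theorem main_corollary (r m : ℕ) (hr : 1 ≤ r) (hrm : r ≤ m)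
    (am am0 : ℂ) (ham : am ≠ 0) (ha0 : ‖am0‖ < 1)
    (D : Polynomial ℂ) (hDdeg : D.natDegree = m) (hD0 : D ≠ 0)
    (Δ : ℂ → ℂ)
    (hΔ : ∀ z : ℂ, 1 ≤ ‖z‖ →
      Δ z = (-1) ^ (r * (m - r)) * D.eval z * (am / (am0 - z)) ^ (m - r))
    (hcirc : ∀ z : ℂ, ‖z‖ = 1 → Δ z ≠ 0)
    (n : ℤ)
    (hwind : IsWindingNumber (fun t : ℝ => Δ (Complex.exp (Complex.I * t))) n) :
    (((D.roots.filter (fun z => 1 < ‖z‖)).card : ℤ)) = (r : ℤ) - n := by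
  classical
  have hsp : D.Splits := IsAlgClosed.splits D
  have hcard : Multiset.card D.roots = m := by
    rw [Polynomial.splits_iff_card_roots.mp hsp, hDdeg]
  have hlc : D.leadingCoeff ≠ 0 := Polynomial.leadingCoeff_ne_zero.mpr hD0
  have hEval : ∀ z : ℂ, D.eval z = D.leadingCoeff * ((D.roots.map (fun a => z - a)).prod) := by
    intro z
    conv_lhs => rw [Polynomial.Splits.eq_prod_roots hsp]
    rw [Polynomial.eval_mul, Polynomial.eval_C, Polynomial.eval_multiset_prod, Multiset.map_map]
    simp [Function.comp]
  have hnz1 : ∀ a ∈ D.roots, ‖a‖ ≠ 1 := by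
    intro a haroots habs
    have hev : D.eval a = 0 := Polynomial.isRoot_of_mem_roots haroots
    apply hcirc a habs
    rw [hΔ a (le_of_eq habs.symm), hev]
    ring
  have windD := Wind.mul (Wind.const hlc) (Wind.multiset_prod D.roots hnz1)
  have w1 : IsWindingNumber (fun t : ℝ => am0 - Complex.exp (Complex.I * t)) (0 + 1) := by
    have hm1 : (-1 : ℂ) ≠ 0 := neg_ne_zero.mpr one_ne_zero
    exact Wind.congr' (fun t ht => by ring)
      (Wind.mul (Wind.const hm1) (Wind.sub_inside ha0))
  have w2 := Wind.inv w1
  have w3 := Wind.mul (Wind.const ham) w2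
  have w4 := Wind.pow w3 (m - r)
  have hm1 : ((-1:ℂ)) ^ (r*(m-r)) ≠ 0 := pow_ne_zero _ (neg_ne_zero.mpr one_ne_zero)
  have wtot := Wind.mul (Wind.mul (Wind.const hm1) windD) w4
  have hcurve : IsWindingNumber (fun t : ℝ => Δ (Complex.exp (Complex.I * t)))
      ((0 + (0 + ((Multiset.filter (fun a => ‖a‖ < 1) D.roots).card : ℤ)))
        + ((m-r : ℕ) : ℤ) * (0 + -(0+1))) := by
    refine Wind.congr' (fun t ht => ?_) wtot
    rw [hΔ _ (le_of_eq (Wind.exp_I_abs t).symm), hEval, div_eq_mul_inv]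
  have hn := Wind.unique hwind hcurve
  have hq : Multiset.filter (fun a => ¬ ‖a‖ < 1) D.roots
      = Multiset.filter (fun z => 1 < ‖z‖) D.roots := by
    apply Multiset.filter_congr
    intro a haroots
    constructor
    · exact fun h => lt_of_le_of_ne (not_lt.1 h) (Ne.symm (hnz1 a haroots))
    · exact fun h => not_lt.2 h.le
  have hpq : (Multiset.filter (fun a => ‖a‖ < 1) D.roots).card
      + (Multiset.filter (fun z => 1 < ‖z‖) D.roots).card = m := by
    rw [← hq, ← Multiset.card_add, Multiset.filter_add_not, hcard]
  simp only [zero_add] at hn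
  omega
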